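/- If the price elasticity satisfies ε > 1, then aggregate demand explodes at low prices: D_agg(P) = θ_U·ς(P,H(P))·P^(−ε) + (θ_S·ς(P,H(P)) − δ)·P^(−1) → +∞ as P → 0⁺. -/

import Mathlib

open Filter

/-- If the price elasticity satisfies `ε > 1`, then aggregate demand
explodes at low prices:
`D_agg(P) = θ_U·ς(P,H(P))·P^(−ε) + (θ_S·ς(P,H(P)) − δ)·P^(−1) → +∞` as `P → 0⁺`. -/
theorem aggregate_demand_tendsto_atTop_at_zero_price
    (φ : ℝ → ℝ)
    (hφc : ContinuousOn φ (Set.Ici 0))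
    (hφm : StrictMonoOn φ (Set.Ici 0))
    (hφ0 : 0 ≤ φ 0)
    (hφtop : Filter.Tendsto (fun H : ℝ => H * φ H) Filter.atTop Filter.atTop)
    (B Φ : ℝ) (hB : 0 < B) (hΦ : 0 ≤ Φ)
    (Hs : ℝ → ℝ)
    (hHs : ∀ P : ℝ, 0 < P → 0 < Hs P ∧ Hs P * φ (Hs P) = P * (B + Φ))
    (Ψ : ℝ → ℝ)
    (hΨc : Continuous Ψ)
    (hΨm : StrictMono Ψ)
    (hΨ01 : ∀ x : ℝ, 0 < Ψ x ∧ Ψ x < 1)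
    (hΨbot : Tendsto Ψ atBot (nhds 0))
    (hΨtop : Tendsto Ψ atTop (nhds 1))
    (g k σ sstar : ℝ) (hg : 0 < g) (hk : 0 < k) (hσ : 0 < σ)
    (θU θS δ e : ℝ) (hθU : 0 < θU) (hθS : 0 < θS) (hδ : 0 ≤ δ) (he : 1 < e) :
    Tendsto
      (fun P : ℝ =>
        θU * Ψ ((sstar - g * P + k * Hs P) / σ) * P ^ (-e) +
          (θS * Ψ ((sstar - g * P + k * Hs P) / σ) - δ) * P⁻¹)
      (nhdsWithin 0 (Set.Ioi 0)) atTop := by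
  set c := Ψ ((sstar - g) / σ) with hc
  have hc0 : 0 < c := (hΨ01 _).1
  have hmain : Tendsto (fun P : ℝ => (θU * c * (P⁻¹) ^ (e - 1) - δ) * P⁻¹)
      (nhdsWithin 0 (Set.Ioi 0)) atTop := by
    have h1 : Tendsto (fun P : ℝ => (P⁻¹) ^ (e - 1)) (nhdsWithin 0 (Set.Ioi 0)) atTop :=
      (tendsto_rpow_atTop (by linarith)).comp tendsto_inv_nhdsGT_zero
    have h2 := tendsto_atTop_add_const_right (nhdsWithin (0:ℝ) (Set.Ioi 0)) (-δ)
      (h1.const_mul_atTop (by positivity : (0:ℝ) < θU * c))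
    have h3 : Tendsto (fun P : ℝ => θU * c * (P⁻¹) ^ (e - 1) - δ)
        (nhdsWithin 0 (Set.Ioi 0)) atTop := by simpa [sub_eq_add_neg, mul_assoc] using h2
    exact h3.atTop_mul_atTop₀ tendsto_inv_nhdsGT_zero
  apply tendsto_atTop_mono' _ _ hmain
  filter_upwards [self_mem_nhdsWithin,
    Icc_mem_nhdsGT_of_mem (by constructor <;> norm_num : (0:ℝ) ∈ Set.Ico 0 1)] with P hP hP1
  have hP0 : (0:ℝ) < P := hP
  have hPle : P ≤ 1 := hP1.2
  have hHsP := (hHs P hP0).1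
  have harg : (sstar - g) / σ ≤ (sstar - g * P + k * Hs P) / σ := by
    apply div_le_div_of_nonneg_right ?_ hσ.le
    nlinarith
  have hΨle : c ≤ Ψ ((sstar - g * P + k * Hs P) / σ) := hΨm.monotone harg
  have hΨpos : 0 < Ψ ((sstar - g * P + k * Hs P) / σ) := (hΨ01 _).1
  have hrpow : (P⁻¹) ^ (e - 1) * P⁻¹ = P ^ (-e) := by
    rw [Real.inv_rpow hP0.le, ← Real.rpow_neg_one P, ← Real.rpow_neg hP0.le,
      ← Real.rpow_add hP0]
    ring_nf
  have hPinv : 0 < P⁻¹ := inv_pos.mpr hP0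
  have hPe : 0 < P ^ (-e) := Real.rpow_pos_of_pos hP0 _
  have h1 : θU * c * (P⁻¹) ^ (e - 1) * P⁻¹ ≤ θU * Ψ ((sstar - g * P + k * Hs P) / σ) * P ^ (-e) := by
    rw [mul_assoc, hrpow]
    apply mul_le_mul_of_nonneg_right _ hPe.le
    nlinarith
  nlinarith [mul_pos (mul_pos hθS hΨpos) hPinv, h1]
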